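/- Let N ≥ 1, let β₁,…,β_N > 0 with β := ∑_{k=1}^{N} β_k, and let b₁,…,b_N > 0. Then the matrix B := −I_N + (1/β)·(𝛃 − 𝐛)·𝟙ᵀ, where 𝛃 = (β₁,…,β_N), 𝐛 = (b₁,…,b_N), and 𝟙 is the all-ones vector in ℝᴺ, is diagonally stable. -/

import Mathlib

open Matrix

/-- A real square matrix `A` is *diagonally stable* if there exists a diagonal matrix `D`
with positive diagonal entries such that `Aᵀ D + D A` is negative definite. -/
def DiagonallyStable {n : Type*} [Fintype n] [DecidableEq n] (A : Matrix n n ℝ) : Prop :=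
  ∃ d : n → ℝ, (∀ i, 0 < d i) ∧
    (-(Aᵀ * Matrix.diagonal d + Matrix.diagonal d * A)).PosDef

open Finset in
lemma rank2_core (P Q S a t sc T : ℝ) (hP0 : 0 ≤ P) (hQ0 : 0 < Q) (hS0 : 0 < S)
    (hP : P < T) (hQ : Q ≤ T) (hT : sc + T = 2)
    (cauchy : ∀ p q : ℝ, 0 ≤ p → 0 ≤ q → p ^ 2 = P → q ^ 2 = Q →
      (q * a + p * t) ^ 2 ≤ (q ^ 2 * P + 2 * p * q * sc + p ^ 2 * Q) * S)
    (hPzero : P = 0 → a = 0) :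
    2 * (a * t) < 2 * S := by
  have hT0 : 0 < T := lt_of_lt_of_le hQ0 hQ
  set p : ℝ := Real.sqrt P with hpdef
  set q : ℝ := Real.sqrt Q with hqdef
  have hp0 : 0 ≤ p := Real.sqrt_nonneg _
  have hq0 : 0 < q := Real.sqrt_pos.mpr hQ0
  have hpp : p ^ 2 = P := Real.sq_sqrt hP0
  have hqq : q ^ 2 = Q := Real.sq_sqrt hQ0.le
  have hcs := cauchy p q hp0 hq0.le hpp hqq
  clear_value p q
  have amgm : 4 * (p * q) * (a * t) ≤ (q * a + p * t) ^ 2 := by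
    nlinarith [sq_nonneg (q * a - p * t)]
  have hPQ : (p * q) ^ 2 = P * Q := by rw [mul_pow, hpp, hqq]
  have key : 4 * (p * q) * (a * t) ≤ 2 * (p * q) * ((p * q + sc) * S) := by
    calc 4 * (p * q) * (a * t) ≤ (q * a + p * t) ^ 2 := amgm
      _ ≤ (q ^ 2 * P + 2 * p * q * sc + p ^ 2 * Q) * S := hcs
      _ = 2 * (p * q) * ((p * q + sc) * S) := by
          linear_combination (-(S * q ^ 2)) * hpp + (-(S * p ^ 2)) * hqq
  have hpqT : p * q < T := by
    have h1 : P * Q < T ^ 2 := by nlinarith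
    nlinarith [mul_nonneg hp0 hq0.le]
  rcases eq_or_lt_of_le (mul_nonneg hp0 hq0.le) with hpq | hpq
  · have hPz : P = 0 := by
      rcases mul_eq_zero.mp hpq.symm with h | h
      · nlinarith [hpp]
      · exact absurd h hq0.ne'
    rw [hPzero hPz]; nlinarith
  · have h2 : 2 * (a * t) ≤ (p * q + sc) * S :=
      le_of_mul_le_mul_left (by nlinarith [key]) (by linarith : (0:ℝ) < 2 * (p * q))
    nlinarith

open Finset in
/-- Key analytic inequality: a rank-two Cauchy–Schwarz bound. -/
lemma rank2_bound {ι : Type*} [Fintype ι] [Nonempty ι] (d c x : ι → ℝ)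
    (hd : ∀ i, 0 < d i) (T : ℝ)
    (hP : ∑ i, d i * c i ^ 2 < T) (hQ : ∑ i, 1 / d i ≤ T)
    (hT : ∑ i, c i + T = 2) (hx : x ≠ 0) :
    2 * ((∑ i, d i * c i * x i) * (∑ i, x i)) < 2 * ∑ i, d i * x i ^ 2 := by
  have hP0 : (0:ℝ) ≤ ∑ i, d i * c i ^ 2 :=
    Finset.sum_nonneg fun i _ => mul_nonneg (hd i).le (sq_nonneg _)
  have hQ0 : (0:ℝ) < ∑ i, 1 / d i :=
    Finset.sum_pos (fun i _ => by have := hd i; positivity) univ_nonempty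
  obtain ⟨i₀, hi₀⟩ := Function.ne_iff.mp hx
  have hi₀' : x i₀ ≠ 0 := hi₀
  have hS0 : (0:ℝ) < ∑ i, d i * x i ^ 2 :=
    Finset.sum_pos' (fun i _ => mul_nonneg (hd i).le (sq_nonneg _))
      ⟨i₀, Finset.mem_univ i₀, mul_pos (hd i₀) (sq_pos_iff.mpr hi₀')⟩
  refine rank2_core _ _ _ _ _ _ T hP0 hQ0 hS0 hP hQ hT ?_ ?_
  · intro p q hp0 hq0 hpp hqq
    have h := Finset.sum_sq_le_sum_mul_sum_of_sq_eq_mul Finset.univ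
      (r := fun i => (q * c i + p / d i) * (d i * x i))
      (f := fun i => (q * c i + p / d i) ^ 2 * d i)
      (g := fun i => d i * x i ^ 2)
      (fun i _ => mul_nonneg (sq_nonneg _) (hd i).le)
      (fun i _ => mul_nonneg (hd i).le (sq_nonneg _))
      (fun i _ => by ring)
    have e1 : ∑ i, (q * c i + p / d i) * (d i * x i)
        = q * (∑ i, d i * c i * x i) + p * (∑ i, x i) := by
      rw [Finset.mul_sum, Finset.mul_sum, ← Finset.sum_add_distrib]
      refine Finset.sum_congr rfl fun i _ => ?_
      have hdi := (hd i).ne'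
      field_simp
    have e2 : ∑ i, (q * c i + p / d i) ^ 2 * d i =
        q ^ 2 * (∑ i, d i * c i ^ 2) + 2 * p * q * (∑ i, c i) + p ^ 2 * (∑ i, 1 / d i) := by
      rw [Finset.mul_sum, Finset.mul_sum, Finset.mul_sum,
        ← Finset.sum_add_distrib, ← Finset.sum_add_distrib]
      refine Finset.sum_congr rfl fun i _ => ?_
      have hdi := (hd i).ne'
      field_simp
      ring
    rw [e1, e2] at h
    exact h
  · intro hPz
    have hc : ∀ i, c i = 0 := by
      intro i
      have h0 : ∀ j ∈ Finset.univ, (0:ℝ) ≤ d j * c j ^ 2 :=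
        fun j _ => mul_nonneg (hd j).le (sq_nonneg _)
      have h1 := (Finset.sum_eq_zero_iff_of_nonneg h0).mp hPz i (Finset.mem_univ i)
      have h2 : c i ^ 2 = 0 := by
        rcases mul_eq_zero.mp h1 with h | h
        · exact absurd h (hd i).ne'
        · exact h
      exact pow_eq_zero_iff (two_ne_zero) |>.mp h2
    exact Finset.sum_eq_zero fun i _ => by rw [hc i]; ring

open Finset in
/-- the AGC interconnection matrix `B = -I + (1/β)(𝛃 - 𝐛)𝟙ᵀ` is
diagonally stable for any positive frequency characteristics `βₖ` and biases `bₖ`. -/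
theorem agc_matrix_diagonallyStable (N : ℕ) (hN : 1 ≤ N)
    (β b : Fin N → ℝ) (hβ : ∀ k, 0 < β k) (hb : ∀ k, 0 < b k)
    (βtot : ℝ) (hβtot : βtot = ∑ k, β k)
    (B : Matrix (Fin N) (Fin N) ℝ)
    (hB : B = -(1 : Matrix (Fin N) (Fin N) ℝ) +
        (1 / βtot) • Matrix.vecMulVec (β - b) (fun _ => 1)) :
    DiagonallyStable B := by
  haveI : NeZero N := ⟨Nat.one_le_iff_ne_zero.mp hN⟩
  have hβt : 0 < βtot := by
    rw [hβtot]; exact Finset.sum_pos (fun i _ => hβ i) univ_nonempty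
  set c : Fin N → ℝ := fun i => (β i - b i) / βtot with hc
  set m : ℝ := Finset.univ.inf' univ_nonempty (fun i => β i * b i) with hm
  have hm0 : 0 < m := by
    rw [hm]
    exact (Finset.lt_inf'_iff _).mpr fun i _ => mul_pos (hβ i) (hb i)
  have hmle : ∀ i, m ≤ β i * b i := fun i => Finset.inf'_le _ (Finset.mem_univ i)
  set δ : ℝ := m / βtot ^ 2 with hδdef
  have hδ : 0 < δ := by positivity
  set d : Fin N → ℝ := fun i => (β i + b i) / (βtot * (c i ^ 2 + δ)) with hd
  have hdpos : ∀ i, 0 < d i := fun i => by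
    have h1 := hβ i; have h2 := hb i
    have h3 : 0 < c i ^ 2 + δ := by positivity
    rw [hd]; positivity
  set T : ℝ := ∑ i, (β i + b i) / βtot with hT
  have hc2 : ∀ i, βtot ^ 2 * c i ^ 2 = (β i - b i) ^ 2 := fun i => by
    rw [hc]; field_simp
  have hδ2 : βtot ^ 2 * δ = m := by rw [hδdef]; field_simp
  have hP : ∑ i, d i * c i ^ 2 < T := by
    refine Finset.sum_lt_sum_of_nonempty univ_nonempty fun i _ => ?_
    have h1 := hβ i; have h2 := hb i
    have hz : 0 < c i ^ 2 + δ := by positivity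
    rw [hd, div_mul_eq_mul_div, div_lt_div_iff₀ (by positivity) hβt]
    nlinarith [mul_pos (show (0:ℝ) < β i + b i by linarith) (mul_pos hβt hδ), sq_nonneg (c i)]
  have hQ : ∑ i, 1 / d i ≤ T := by
    refine Finset.sum_le_sum fun i _ => ?_
    have h1 := hβ i; have h2 := hb i
    have hz : 0 < c i ^ 2 + δ := by positivity
    rw [hd, one_div_div, div_le_div_iff₀ (by linarith) hβt]
    nlinarith [hc2 i, hδ2, hmle i]
  have hTs : ∑ i, c i + T = 2 := by
    rw [hT, ← Finset.sum_add_distrib]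
    have e : ∀ i ∈ Finset.univ, c i + (β i + b i) / βtot = 2 * β i / βtot := fun i _ => by
      rw [hc]; field_simp; ring
    rw [Finset.sum_congr rfl e]
    have e2 : ∑ i, 2 * β i / βtot = (2 * ∑ i, β i) / βtot := by
      rw [← Finset.sum_div, ← Finset.mul_sum]
    rw [e2, ← hβtot]
    field_simp
  have hBij : ∀ i j, B i j = (if i = j then (-1:ℝ) else 0) + c i := by
    intro i j
    rw [hB]
    simp only [Matrix.add_apply, Matrix.neg_apply, Matrix.smul_apply,
      Matrix.vecMulVec_apply, Matrix.one_apply, Pi.sub_apply, smul_eq_mul, hc]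
    by_cases h : i = j <;> simp [h] <;> ring
  have hMij : ∀ i j, (-(Bᵀ * Matrix.diagonal d + Matrix.diagonal d * B)) i j =
      (if i = j then 2 * d i else 0) - (d i * c i + d j * c j) := by
    intro i j
    simp only [Matrix.neg_apply, Matrix.add_apply]
    rw [show (Bᵀ * Matrix.diagonal d) i j = B j i * d j from by
      rw [Matrix.mul_diagonal]; rfl]
    rw [Matrix.diagonal_mul]
    rw [hBij j i, hBij i j]
    by_cases h : i = j
    · subst h; simp; ring
    · simp [h, Ne.symm h]; ring
  refine ⟨d, hdpos, Matrix.PosDef.of_dotProduct_mulVec_pos ?_ ?_⟩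
  · -- Hermitian
    ext i j
    simp only [Matrix.conjTranspose_apply, star_trivial]
    rw [hMij j i, hMij i j]
    by_cases h : i = j
    · subst h; ring_nf
    · simp [h, Ne.symm h]; ring
  · -- positivity of the quadratic form
    intro x hx
    have quad : dotProduct (star x) ((-(Bᵀ * Matrix.diagonal d + Matrix.diagonal d * B)) *ᵥ x) =
        2 * (∑ i, d i * x i ^ 2) - 2 * ((∑ i, d i * c i * x i) * (∑ i, x i)) := by
      simp only [star_trivial, dotProduct, Matrix.mulVec, dotProduct]
      have e1 : ∀ i, ∑ j, (-(Bᵀ * Matrix.diagonal d + Matrix.diagonal d * B)) i j * x j =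
          2 * d i * x i - d i * c i * (∑ j, x j) - (∑ j, d j * c j * x j) := by
        intro i
        have e0 : ∀ j, (-(Bᵀ * Matrix.diagonal d + Matrix.diagonal d * B)) i j * x j =
            (if j = i then 2 * d i * x i else 0) - (d i * c i * x j + d j * c j * x j) := by
          intro j
          rw [hMij i j]
          by_cases h : i = j
          · subst h; simp; ring
          · simp [h, Ne.symm h]; ring
        rw [Finset.sum_congr rfl fun j _ => e0 j]
        rw [Finset.sum_sub_distrib, Finset.sum_ite_eq' Finset.univ i
          (fun _ => 2 * d i * x i), Finset.sum_add_distrib, ← Finset.mul_sum]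
        simp only [Finset.mem_univ, if_true]
        ring
      rw [Finset.sum_congr rfl fun i _ => by rw [e1 i]]
      have e3 : ∀ i ∈ Finset.univ, x i * (2 * d i * x i - d i * c i * (∑ j, x j)
          - (∑ j, d j * c j * x j)) = 2 * (d i * x i ^ 2)
          - (d i * c i * x i) * (∑ j, x j) - x i * (∑ j, d j * c j * x j) := fun i _ => by
        ring
      rw [Finset.sum_congr rfl e3, Finset.sum_sub_distrib, Finset.sum_sub_distrib,
        ← Finset.mul_sum, ← Finset.sum_mul, ← Finset.sum_mul]
      ring
    have key := rank2_bound d c x hdpos T hP hQ hTs hx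
    rw [quad]
    linarith
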